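/- arXiv:1306.2653 — 5 statements merged into one kernel-verified Lean document; each statement's English description precedes it below -/
import Mathlib

section
/- The function T(u,v,A) = 100√(uv) − uv/(A+1) is concave on the domain G = {(u,v,A) : u ≥ 0, v ≥ 0, 0 ≤ A ≤ 1, uv ≤ 2}. -/
set_option maxHeartbeats 1000000 in
private theorem key_ineq (u v A du dv dA r : ℝ) (hu : 0 < u) (hv : 0 < v) (hA : 0 < A)
    (hr : 0 < r) (hr2 : r^2 = u*v) (h2 : u*v < 2) :
    100*du*dv/r - 25*(du*v + u*dv)^2/r^3 - 2*du*dv/(A+1)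
      + 2*dA*(du*v + u*dv)/(A+1)^2 - 2*(u*v)*dA^2/(A+1)^3 ≤ 0 := by
  have hq : (0:ℝ) < A + 1 := by linarith
  have hrlt : r < 2 := by nlinarith
  have hveq : v = r^2/u := by field_simp; linear_combination -hr2
  subst hveq
  set S := du*(A+1) - u*dA with hS
  set Tt := dv*(A+1)*u - r^2*dA with hT
  have key : 0 ≤ 25*(A+1)*(r^2*S - u*Tt)^2 + 2*r^3*u*(S*Tt) := by
    nlinarith [mul_nonneg hr.le (sq_nonneg (r^2*S + u*Tt)),
      mul_nonneg (by nlinarith : (0:ℝ) ≤ 50*(A+1) - r) (sq_nonneg (r^2*S - u*Tt))]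
  have heq : 100*du*dv/r - 25*(du*(r^2/u) + u*dv)^2/r^3 - 2*du*dv/(A+1)
      + 2*dA*(du*(r^2/u) + u*dv)/(A+1)^2 - 2*(u*(r^2/u))*dA^2/(A+1)^3
      = -((25*(A+1)*(r^2*S - u*Tt)^2 + 2*r^3*u*(S*Tt))/(u^2*r^3*(A+1)^3)) := by
    rw [hS, hT]
    field_simp
    ring
  rw [heq, neg_nonpos]
  positivity

/-- `T(u,v,A) = 100√(uv) − uv/(A+1)` is concave on
`G = {u ≥ 0, v ≥ 0, 0 ≤ A ≤ 1, uv ≤ 2}`, in the Hessian sense at interior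
points: at each interior point of `G` the second derivative of `T` along
any line is nonpositive. -/
theorem stmt_2 (T : ℝ → ℝ → ℝ → ℝ)
    (hT : ∀ u v A, T u v A = 100 * Real.sqrt (u * v) - u * v / (A + 1)) :
    ∀ u v A : ℝ, 0 < u → 0 < v → 0 < A → A < 1 → u * v < 2 →
      ∀ du dv dA : ℝ,
        deriv (deriv (fun s : ℝ => T (u + s * du) (v + s * dv) (A + s * dA))) 0 ≤ 0 := by
  intro u v A hu hv hA hA1 h2 du dv dA
  have hfe : (fun s : ℝ => T (u + s * du) (v + s * dv) (A + s * dA))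
      = fun s : ℝ => 100 * Real.sqrt ((u + s*du)*(v + s*dv)) - (u + s*du)*(v + s*dv)/(A + s*dA + 1) :=
    funext fun s => hT _ _ _
  rw [hfe]
  set g : ℝ → ℝ := fun s =>
    100 * ((du*(v + s*dv) + (u + s*du)*dv) / (2 * Real.sqrt ((u + s*du)*(v + s*dv))))
      - ((du*(v + s*dv) + (u + s*du)*dv) * (A + s*dA + 1) - (u + s*du)*(v + s*dv)*dA) / (A + s*dA + 1)^2
    with hgdef
  -- first derivative near 0
  have hderiv : ∀ s : ℝ, 0 < (u + s*du)*(v + s*dv) → 0 < A + s*dA + 1 →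
      HasDerivAt (fun s : ℝ => 100 * Real.sqrt ((u + s*du)*(v + s*dv)) - (u + s*du)*(v + s*dv)/(A + s*dA + 1))
        (g s) s := by
    intro s hP hQ
    have hu' : HasDerivAt (fun s : ℝ => u + s*du) du s := by
      simpa using ((hasDerivAt_id s).mul_const du).const_add u
    have hv' : HasDerivAt (fun s : ℝ => v + s*dv) dv s := by
      simpa using ((hasDerivAt_id s).mul_const dv).const_add v
    have hq' : HasDerivAt (fun s : ℝ => A + s*dA + 1) dA s := by
      simpa using (((hasDerivAt_id s).mul_const dA).const_add A).add_const 1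
    have hP' : HasDerivAt (fun s : ℝ => (u + s*du)*(v + s*dv)) (du*(v + s*dv) + (u + s*du)*dv) s :=
      hu'.mul hv'
    have hS : HasDerivAt (fun s : ℝ => Real.sqrt ((u + s*du)*(v + s*dv)))
        ((du*(v + s*dv) + (u + s*du)*dv) / (2 * Real.sqrt ((u + s*du)*(v + s*dv)))) s :=
      hP'.sqrt hP.ne'
    exact (hS.const_mul 100).sub (hP'.div hq' hQ.ne')
  -- positivity of P and Q near 0
  have hp0 : (0:ℝ) < (u + 0*du)*(v + 0*dv) := by
    norm_num; positivity
  have hq0 : (0:ℝ) < A + 0*dA + 1 := by norm_num; linarith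
  have hc1 : ContinuousAt (fun s : ℝ => (u + s*du)*(v + s*dv)) 0 := by fun_prop
  have hc2 : ContinuousAt (fun s : ℝ => A + s*dA + 1) 0 := by fun_prop
  have ev1 : ∀ᶠ s in nhds (0:ℝ), 0 < (u + s*du)*(v + s*dv) :=
    hc1.eventually (eventually_gt_nhds hp0)
  have ev2 : ∀ᶠ s in nhds (0:ℝ), 0 < A + s*dA + 1 :=
    hc2.eventually (eventually_gt_nhds hq0)
  have hev : deriv (fun s : ℝ => 100 * Real.sqrt ((u + s*du)*(v + s*dv))
      - (u + s*du)*(v + s*dv)/(A + s*dA + 1)) =ᶠ[nhds 0] g :=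
    (ev1.and ev2).mono fun s hs => (hderiv s hs.1 hs.2).deriv
  rw [Filter.EventuallyEq.deriv_eq hev]
  -- second derivative: derivative of g at 0
  set r := Real.sqrt (u*v) with hrdef
  have huv : 0 < u*v := mul_pos hu hv
  have hr : 0 < r := Real.sqrt_pos.2 huv
  have hgd : HasDerivAt g
      (100*du*dv/r - 25*(du*v + u*dv)^2/r^3 - 2*du*dv/(A+1)
        + 2*dA*(du*v + u*dv)/(A+1)^2 - 2*(u*v)*dA^2/(A+1)^3) 0 := by
    have hu' : HasDerivAt (fun s : ℝ => u + s*du) du 0 := by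
      simpa using ((hasDerivAt_id 0).mul_const du).const_add u
    have hv' : HasDerivAt (fun s : ℝ => v + s*dv) dv 0 := by
      simpa using ((hasDerivAt_id 0).mul_const dv).const_add v
    have hq' : HasDerivAt (fun s : ℝ => A + s*dA + 1) dA 0 := by
      simpa using (((hasDerivAt_id 0).mul_const dA).const_add A).add_const 1
    have hP' : HasDerivAt (fun s : ℝ => (u + s*du)*(v + s*dv)) (du*(v + 0*dv) + (u + 0*du)*dv) 0 :=
      hu'.mul hv'
    have hP0 : (u + 0*du)*(v + 0*dv) = u*v := by ring
    have hL : HasDerivAt (fun s : ℝ => du*(v + s*dv) + (u + s*du)*dv) (du*dv + du*dv) 0 := by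
      have := (hv'.const_mul du).add (hu'.mul_const dv)
      simpa [Pi.add_def] using this
    have hS : HasDerivAt (fun s : ℝ => Real.sqrt ((u + s*du)*(v + s*dv)))
        ((du*(v + 0*dv) + (u + 0*du)*dv) / (2 * Real.sqrt ((u + 0*du)*(v + 0*dv)))) 0 :=
      hP'.sqrt (by rw [hP0]; exact huv.ne')
    have h2S : HasDerivAt (fun s : ℝ => 2 * Real.sqrt ((u + s*du)*(v + s*dv)))
        (2 * ((du*(v + 0*dv) + (u + 0*du)*dv) / (2 * Real.sqrt ((u + 0*du)*(v + 0*dv))))) 0 :=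
      hS.const_mul 2
    have hsq0 : Real.sqrt ((u + 0*du)*(v + 0*dv)) = r := by rw [hP0]
    have hne2 : (2 * Real.sqrt ((u + 0*du)*(v + 0*dv))) ≠ 0 := by
      rw [hsq0]; positivity
    have hT1 := ((hL.div h2S hne2).const_mul 100)
    have hN : HasDerivAt (fun s : ℝ => (du*(v + s*dv) + (u + s*du)*dv) * (A + s*dA + 1) - (u + s*du)*(v + s*dv)*dA)
        (((du*dv + du*dv) * (A + 0*dA + 1) + (du*(v + 0*dv) + (u + 0*du)*dv) * dA)
         - (du*(v + 0*dv) + (u + 0*du)*dv)*dA) 0 :=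
      (hL.mul hq').sub (hP'.mul_const dA)
    have hQsq : HasDerivAt (fun s : ℝ => (A + s*dA + 1)^2)
        (2 * (A + 0*dA + 1)^1 * dA) 0 := by
      simpa [Pi.pow_def] using hq'.pow 2
    have hQne : ((A + 0*dA + 1)^2 : ℝ) ≠ 0 := by
      have : (0:ℝ) < A + 0*dA + 1 := by linarith
      positivity
    have hT2 := hN.div hQsq hQne
    have H := hT1.sub hT2
    rw [hgdef]
    refine H.congr_deriv ?_
    rw [hsq0]
    simp only [zero_mul, add_zero, mul_zero, pow_one]
    have hrne : r ≠ 0 := hr.ne'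
    have hqne : (A:ℝ) + 1 ≠ 0 := by linarith
    field_simp
    ring
  rw [hgd.deriv]
  exact key_ineq u v A du dv dA r hu hv hA hr (Real.sq_sqrt huv.le) h2
end

section
/- Let κ > 0 and a(t) = t·(log t)^{−κ} for t ≥ 2. Then a is weakly concave on [2,∞): there exists a constant C = C(κ) > 0 such that for all n, all x₁,…,xₙ ∈ [2,∞) and λ₁,…,λₙ ∈ [0,1] with Σλⱼ = 1, a(Σλⱼxⱼ) ≥ C Σλⱼ a(xⱼ). -/
open Real Finset

/-- for `κ > 0`, the function `a(t) = t (log t)^{−κ}` is weakly concave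
on `[2,∞)`: there is a constant `C = C(κ) > 0` such that for all finite convex
combinations of points of `[2,∞)`, `a(Σ λⱼ xⱼ) ≥ C Σ λⱼ a(xⱼ)`. -/
theorem stmt_7 (κ : ℝ) (hκ : 0 < κ) :
    ∃ C : ℝ, 0 < C ∧
      ∀ (n : ℕ) (x : Fin n → ℝ) (l : Fin n → ℝ),
        (∀ j, 2 ≤ x j) → (∀ j, 0 ≤ l j ∧ l j ≤ 1) → (∑ j, l j) = 1 →
        C * ∑ j, l j * (x j / Real.log (x j) ^ κ)
          ≤ (∑ j, l j * x j) / Real.log (∑ j, l j * x j) ^ κ := by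
  have h2 : (0:ℝ) < Real.log 2 := Real.log_pos (by norm_num)
  set K : ℝ := 2 ^ κ + (2*κ) ^ κ / Real.log 2 ^ κ with hKdef
  have hKpos : 0 < K := by positivity
  refine ⟨K⁻¹, by positivity, ?_⟩
  intro n x l hx hl hsum
  set m : ℝ := ∑ j, l j * x j with hm
  have hm2 : (2:ℝ) ≤ m := by
    calc (2:ℝ) = ∑ j, l j * 2 := by rw [← Finset.sum_mul, hsum, one_mul]
    _ ≤ m := Finset.sum_le_sum fun j _ => mul_le_mul_of_nonneg_left (hx j) (hl j).1
  have hmpos : (0:ℝ) < m := by linarith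
  have hlogm : 0 < Real.log m := Real.log_pos (by linarith)
  -- per-term bound
  have key : ∀ j, l j * (x j / Real.log (x j) ^ κ)
      ≤ l j * (2 ^ κ * (x j / Real.log m ^ κ)) + l j * (m ^ ((1:ℝ)/2) / Real.log 2 ^ κ) := by
    intro j
    have hxj := hx j
    have hlj := (hl j).1
    have hlogx : 0 < Real.log (x j) := Real.log_pos (by linarith)
    rcases le_total (x j) (m ^ ((1:ℝ)/2)) with hcase | hcase
    · have h1 : x j / Real.log (x j) ^ κ ≤ m ^ ((1:ℝ)/2) / Real.log 2 ^ κ := by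
        have hle : Real.log 2 ^ κ ≤ Real.log (x j) ^ κ :=
          Real.rpow_le_rpow h2.le (Real.log_le_log (by norm_num) hxj) hκ.le
        calc x j / Real.log (x j) ^ κ ≤ x j / Real.log 2 ^ κ := by
              gcongr
          _ ≤ m ^ ((1:ℝ)/2) / Real.log 2 ^ κ := by gcongr
      have h0 : 0 ≤ l j * (2 ^ κ * (x j / Real.log m ^ κ)) := by positivity
      nlinarith [mul_le_mul_of_nonneg_left h1 hlj]
    · have hlogs : (1/2 : ℝ) * Real.log m ≤ Real.log (x j) := by
        have := Real.log_le_log (by positivity) hcase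
        rw [Real.log_rpow hmpos] at this
        linarith
      have hle : (1/2 : ℝ) ^ κ * Real.log m ^ κ ≤ Real.log (x j) ^ κ := by
        rw [← Real.mul_rpow (by norm_num) hlogm.le]
        exact Real.rpow_le_rpow (by positivity) hlogs hκ.le
      have h1 : x j / Real.log (x j) ^ κ ≤ 2 ^ κ * (x j / Real.log m ^ κ) := by
        have hpos : (0:ℝ) < (1/2 : ℝ) ^ κ * Real.log m ^ κ := by positivity
        calc x j / Real.log (x j) ^ κ ≤ x j / ((1/2 : ℝ) ^ κ * Real.log m ^ κ) := by
              gcongr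
          _ = 2 ^ κ * (x j / Real.log m ^ κ) := by
              rw [one_div, Real.inv_rpow (by norm_num : (0:ℝ) ≤ 2)]
              field_simp
      have h0 : 0 ≤ l j * (m ^ ((1:ℝ)/2) / Real.log 2 ^ κ) := by positivity
      nlinarith [mul_le_mul_of_nonneg_left h1 hlj]
  have e1 : ∑ j, l j * (2 ^ κ * (x j / Real.log m ^ κ))
      = 2 ^ κ * (m / Real.log m ^ κ) := by
    have : ∑ j, l j * (2 ^ κ * (x j / Real.log m ^ κ))
        = (2 ^ κ / Real.log m ^ κ) * ∑ j, l j * x j := by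
      rw [Finset.mul_sum]
      exact Finset.sum_congr rfl fun j _ => by ring
    rw [this, ← hm]
    ring
  have e2 : ∑ j, l j * (m ^ ((1:ℝ)/2) / Real.log 2 ^ κ)
      = m ^ ((1:ℝ)/2) / Real.log 2 ^ κ := by
    rw [← Finset.sum_mul, hsum, one_mul]
  have hsumle : ∑ j, l j * (x j / Real.log (x j) ^ κ)
      ≤ 2 ^ κ * (m / Real.log m ^ κ) + m ^ ((1:ℝ)/2) / Real.log 2 ^ κ := by
    calc ∑ j, l j * (x j / Real.log (x j) ^ κ)
        ≤ ∑ j, (l j * (2 ^ κ * (x j / Real.log m ^ κ)) + l j * (m ^ ((1:ℝ)/2) / Real.log 2 ^ κ)) :=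
          Finset.sum_le_sum fun j _ => key j
      _ = _ := by rw [Finset.sum_add_distrib, e1, e2]
  -- bound sqrt m
  have hsqrt : m ^ ((1:ℝ)/2) ≤ (2*κ) ^ κ * (m / Real.log m ^ κ) := by
    have hlog : Real.log m ≤ 2 * κ * m ^ (1/(2*κ)) := by
      have := Real.log_le_rpow_div hmpos.le (show (0:ℝ) < 1/(2*κ) by positivity)
      calc Real.log m ≤ m ^ (1/(2*κ)) / (1/(2*κ)) := this
        _ = 2 * κ * m ^ (1/(2*κ)) := by field_simp
    have h3 : Real.log m ^ κ ≤ (2*κ) ^ κ * m ^ ((1:ℝ)/2) := by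
      have hexp : 1/(2*κ) * κ = (1:ℝ)/2 := by field_simp
      calc Real.log m ^ κ ≤ (2 * κ * m ^ (1/(2*κ))) ^ κ :=
            Real.rpow_le_rpow hlogm.le hlog hκ.le
        _ = (2*κ) ^ κ * m ^ ((1:ℝ)/2) := by
            rw [Real.mul_rpow (by positivity) (by positivity), ← Real.rpow_mul hmpos.le, hexp]
    have hmm : m ^ ((1:ℝ)/2) * m ^ ((1:ℝ)/2) = m := by
      rw [← Real.rpow_add hmpos]
      norm_num
    have hfin : m ^ ((1:ℝ)/2) * Real.log m ^ κ ≤ (2*κ) ^ κ * m := by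
      calc m ^ ((1:ℝ)/2) * Real.log m ^ κ
          ≤ m ^ ((1:ℝ)/2) * ((2*κ) ^ κ * m ^ ((1:ℝ)/2)) :=
            mul_le_mul_of_nonneg_left h3 (by positivity)
        _ = (2*κ) ^ κ * (m ^ ((1:ℝ)/2) * m ^ ((1:ℝ)/2)) := by ring
        _ = (2*κ) ^ κ * m := by rw [hmm]
    rw [← mul_div_assoc, le_div_iff₀ (by positivity)]
    exact hfin
  have hS : ∑ j, l j * (x j / Real.log (x j) ^ κ) ≤ K * (m / Real.log m ^ κ) := by
    calc ∑ j, l j * (x j / Real.log (x j) ^ κ)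
        ≤ 2 ^ κ * (m / Real.log m ^ κ) + m ^ ((1:ℝ)/2) / Real.log 2 ^ κ := hsumle
      _ ≤ 2 ^ κ * (m / Real.log m ^ κ) + (2*κ) ^ κ * (m / Real.log m ^ κ) / Real.log 2 ^ κ := by
          gcongr
      _ = K * (m / Real.log m ^ κ) := by rw [hKdef]; ring
  calc K⁻¹ * ∑ j, l j * (x j / Real.log (x j) ^ κ)
      ≤ K⁻¹ * (K * (m / Real.log m ^ κ)) := by
        apply mul_le_mul_of_nonneg_left hS (by positivity)
    _ = m / Real.log m ^ κ := by field_simp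
end

section
/- Let φ : (0,δ] → (0,∞) be strictly increasing, continuous with φ(x) = x/ε(1/x) where ε : [1/δ,∞) → (0,∞) is decreasing and ∫_{1/δ}^∞ ε(t)/t dt < ∞. Then ∫₁^∞ φ^{−1}(1/x) dx < ∞. -/
open Set

open MeasureTheory in
/-- let `φ : (0,δ] → (0,∞)` be strictly increasing and continuous,
`φ(x) = x/ε(1/x)` with `ε : [1/δ,∞) → (0,∞)` decreasing, `C¹`, and
`∫_{1/δ}^∞ ε(t)/t dt < ∞`; `φ` is a bijection from `(0,δ]` onto `(0,c]` with `c ≥ 1`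
(`φ(0+)=0`) and `ψ` is its inverse.  Then `∫₁^∞ φ⁻¹(1/x) dx < ∞`. -/
theorem stmt_9 (δ c : ℝ) (hδ : 0 < δ) (hc : 1 ≤ c)
    (ε : ℝ → ℝ) (hε_pos : ∀ t, 1 / δ ≤ t → 0 < ε t)
    (hε_dec : AntitoneOn ε (Ici (1 / δ)))
    (hε_C1 : ContDiffOn ℝ 1 ε (Ici (1 / δ)))
    (hε_int : MeasureTheory.IntegrableOn (fun t => ε t / t) (Ici (1 / δ)))
    (φ : ℝ → ℝ)
    (hφ_def : ∀ x ∈ Ioc 0 δ, φ x = x / ε (1 / x))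
    (hφ_mono : StrictMonoOn φ (Ioc 0 δ))
    (hφ_cont : ContinuousOn φ (Ioc 0 δ))
    (hφ_surj : φ '' (Ioc 0 δ) = Ioc 0 c)
    (hφ_lim : Filter.Tendsto φ (nhdsWithin 0 (Ioi 0)) (nhds 0))
    (ψ : ℝ → ℝ)
    (hψ : ∀ x ∈ Ioc 0 δ, ψ (φ x) = x)
    (hψ' : ∀ y ∈ Ioc 0 c, φ (ψ y) = y) :
    MeasureTheory.IntegrableOn (fun x : ℝ => ψ (1 / x)) (Ici (1 : ℝ)) := by
  have hδ' : (0:ℝ) < 1 / δ := by positivity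
  -- ψ maps (0,c] into (0,δ]
  have hψ_mem : ∀ y ∈ Ioc 0 c, ψ y ∈ Ioc 0 δ := by
    intro y hy
    rw [← hφ_surj] at hy
    obtain ⟨x, hx, rfl⟩ := hy
    rw [hψ x hx]; exact hx
  have hψ_mono : MonotoneOn ψ (Ioc 0 c) := by
    intro y1 h1 y2 h2 h12
    by_contra h
    push_neg at h
    have := hφ_mono (hψ_mem y2 h2) (hψ_mem y1 h1) h
    rw [hψ' y1 h1, hψ' y2 h2] at this
    exact absurd h12 (not_le.mpr this)
  have hmem1 : ∀ x : ℝ, 1 ≤ x → (1 / x) ∈ Ioc 0 c := by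
    intro x hx
    have hx0 : (0:ℝ) < x := lt_of_lt_of_le one_pos hx
    refine ⟨by positivity, le_trans ?_ hc⟩
    rw [div_le_one hx0]; exact hx
  set f : ℝ → ℝ := fun x => ψ (1 / x) with hfdef
  have f_anti : AntitoneOn f (Ici 1) := by
    intro x1 h1 x2 h2 h12
    have hx1 : (0:ℝ) < x1 := lt_of_lt_of_le one_pos h1
    exact hψ_mono (hmem1 x2 h2) (hmem1 x1 h1) (one_div_le_one_div_of_le hx1 h12)
  have f_meas : AEMeasurable f (volume.restrict (Ici (1:ℝ))) :=
    aemeasurable_restrict_of_antitoneOn measurableSet_Ici f_anti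
  have f_pos : ∀ x ∈ Ici (1:ℝ), 0 < f x := fun x hx => (hψ_mem _ (hmem1 x hx)).1
  have f_nn : 0 ≤ᵐ[volume.restrict (Ici (1:ℝ))] f :=
    (ae_restrict_iff' measurableSet_Ici).2 (Filter.Eventually.of_forall
      fun x hx => (f_pos x hx).le)
  -- change of variables: integrability of t ↦ ε(1/t)/t on (0,δ)
  have himg : (fun x : ℝ => x⁻¹) '' Ioi (1/δ) = Ioo 0 δ := by
    ext y
    constructor
    · rintro ⟨x, hx, rfl⟩
      have hx0 : (0:ℝ) < x := lt_trans hδ' hx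
      refine ⟨by positivity, ?_⟩
      have := (one_div_lt_one_div hx0 hδ').mpr hx
      rwa [one_div, one_div_one_div] at this
    · rintro ⟨hy0, hyδ⟩
      refine ⟨y⁻¹, ?_, by show y⁻¹⁻¹ = y; rw [inv_inv]⟩
      have := (one_div_lt_one_div hδ hy0).mpr hyδ
      rwa [mem_Ioi, ← one_div]
  have hderiv : ∀ x ∈ Ioi (1/δ), HasDerivWithinAt (fun x : ℝ => x⁻¹)
      (-(x^2)⁻¹) (Ioi (1/δ)) x := by
    intro x hx
    exact (hasDerivAt_inv (ne_of_gt (lt_trans hδ' hx))).hasDerivWithinAt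
  have hinj : InjOn (fun x : ℝ => x⁻¹) (Ioi (1/δ)) := by
    intro a ha b hb hab
    have ha0 : a ≠ 0 := ne_of_gt (lt_trans hδ' ha)
    have hb0 : b ≠ 0 := ne_of_gt (lt_trans hδ' hb)
    field_simp at hab
    exact hab.symm
  have hg : IntegrableOn (fun t => ε (1/t) / t) (Ioo 0 δ) := by
    rw [← himg, integrableOn_image_iff_integrableOn_abs_deriv_smul measurableSet_Ioi
      hderiv hinj]
    refine (hε_int.mono_set Ioi_subset_Ici_self).congr_fun ?_ measurableSet_Ioi
    intro x hx
    have hx0 : (0:ℝ) < x := lt_trans hδ' hx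
    have hx2 : (0:ℝ) < x^2 := by positivity
    show ε x / x = |(-(x ^ 2)⁻¹)| • (ε (1 / x⁻¹) / x⁻¹)
    rw [smul_eq_mul, abs_neg, abs_inv, abs_of_pos hx2, one_div, inv_inv]
    field_simp
  -- layer cake
  have key := lintegral_eq_lintegral_meas_lt (volume.restrict (Ici (1:ℝ))) f_nn f_meas
  have hbound : ∀ t ∈ Ioi (0:ℝ),
      (volume.restrict (Ici (1:ℝ))) {x | t < f x}
        ≤ (Ioo 0 δ).indicator (fun t => ENNReal.ofReal (ε (1/t) / t)) t := by
    intro t ht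
    rw [Measure.restrict_apply' measurableSet_Ici]
    rcases lt_or_ge t δ with htδ | htδ
    · have htI : t ∈ Ioo 0 δ := ⟨ht, htδ⟩
      rw [indicator_of_mem htI]
      have htc : t ∈ Ioc 0 δ := ⟨ht, htδ.le⟩
      have hεt : 0 < ε (1/t) := hε_pos _ (one_div_le_one_div_of_le ht htδ.le)
      have hφt : 0 < φ t := by
        have : φ t ∈ Ioc 0 c := by rw [← hφ_surj]; exact ⟨t, htc, rfl⟩
        exact this.1
      have hsub : {x : ℝ | t < f x} ∩ Ici 1 ⊆ Ioo 0 (1 / φ t) := by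
        rintro x ⟨hxt, hx1⟩
        have hx0 : (0:ℝ) < x := lt_of_lt_of_le one_pos hx1
        have h1x : (1/x) ∈ Ioc 0 c := hmem1 x hx1
        have hfx : f x ∈ Ioc 0 δ := hψ_mem _ h1x
        have h2 : φ t < φ (f x) := hφ_mono htc hfx hxt
        rw [hψ' _ h1x] at h2
        refine ⟨hx0, ?_⟩
        rw [lt_div_iff₀ hφt]
        calc x * φ t < x * (1/x) := by
              exact (mul_lt_mul_iff_right₀ hx0).mpr h2
          _ = 1 := by field_simp
      calc volume ({x : ℝ | t < f x} ∩ Ici 1) ≤ volume (Ioo 0 (1 / φ t)) :=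
            measure_mono hsub
        _ = ENNReal.ofReal (1 / φ t) := by rw [Real.volume_Ioo, sub_zero]
        _ = ENNReal.ofReal (ε (1/t) / t) := by
            rw [hφ_def t htc, one_div_div]
    · have : {x : ℝ | t < f x} ∩ Ici 1 = ∅ := by
        ext x
        simp only [mem_inter_iff, mem_setOf_eq, mem_empty_iff_false, iff_false]
        rintro ⟨hxt, hx1⟩
        have hfx : f x ∈ Ioc 0 δ := hψ_mem _ (hmem1 x hx1)
        exact absurd hxt (not_lt.mpr (le_trans hfx.2 htδ))
      rw [this]
      simp
  have hfin : ∫⁻ t in Ioi (0:ℝ),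
      (volume.restrict (Ici (1:ℝ))) {x | t < f x} < ⊤ := by
    calc ∫⁻ t in Ioi (0:ℝ), (volume.restrict (Ici (1:ℝ))) {x | t < f x}
        ≤ ∫⁻ t in Ioi (0:ℝ),
            (Ioo 0 δ).indicator (fun t => ENNReal.ofReal (ε (1/t) / t)) t := by
          refine lintegral_mono_ae ((ae_restrict_iff' measurableSet_Ioi).2 ?_)
          exact Filter.Eventually.of_forall hbound
      _ = ∫⁻ t in Ioo (0:ℝ) δ, ENNReal.ofReal (ε (1/t) / t) := by
          rw [lintegral_indicator measurableSet_Ioo, Measure.restrict_restrict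
            measurableSet_Ioo, inter_eq_self_of_subset_left Ioo_subset_Ioi_self]
      _ ≤ ∫⁻ t in Ioo (0:ℝ) δ, (‖ε (1/t) / t‖₊ : ENNReal) := by
          exact lintegral_mono fun t => Real.ofReal_le_enorm _
      _ < ⊤ := hg.2
  refine ⟨f_meas.aestronglyMeasurable, ?_⟩
  rw [hasFiniteIntegral_iff_ofReal f_nn, key]
  exact hfin
end

section
/- There is no function B₀ : Ω₀ → ℝ, where Ω₀ = {(u,v,A) : u ≥ 0, v ≥ 0, 0 ≤ A ≤ 1, uv ≤ 1}, that is concave on Ω₀ (in the sense of the midpoint Taylor inequality along admissible dyadic dynamics), satisfies 0 ≤ B₀(u,v,A) ≤ u everywhere, and satisfies the drift inequality B₀(u,v,A) − (B₀(u₊,v₊,A₊)+B₀(u₋,v₋,A₋))/2 ≥ c·α·u²v (for some fixed c > 0) whenever u = (u₊+u₋)/2, v = (v₊+v₋)/2, A = (A₊+A₋)/2 + α with α ∈ [0,1] and all six points lie in Ω₀. -/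
/-- The domain `Ω₀ = {(u,v,A) : u ≥ 0, v ≥ 0, 0 ≤ A ≤ 1, uv ≤ 1}`. -/
def Omega0 (u v A : ℝ) : Prop := 0 ≤ u ∧ 0 ≤ v ∧ 0 ≤ A ∧ A ≤ 1 ∧ u * v ≤ 1

/-- there is no function `B₀` on `Ω₀` with `0 ≤ B₀(u,v,A) ≤ u`
satisfying, for some fixed `c > 0`, the concavity/drift inequality
`B₀(u,v,A) − (B₀(up,vp,Ap)+B₀(um,vm,Am))/2 ≥ c α u² v` along all admissible
dyadic dynamics `u = (up+um)/2`, `v = (vp+vm)/2`, `A = (Ap+Am)/2 + α`,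
`α ∈ [0,1]`, with all points in `Ω₀`. -/
theorem stmt_14 :
    ¬ ∃ (B₀ : ℝ → ℝ → ℝ → ℝ) (c : ℝ), 0 < c
      ∧ (∀ u v A, Omega0 u v A → 0 ≤ B₀ u v A ∧ B₀ u v A ≤ u)
      ∧ (∀ u v A up vp Ap um vm Am α : ℝ,
          Omega0 u v A → Omega0 up vp Ap → Omega0 um vm Am →
          0 ≤ α → α ≤ 1 →
          u = (up + um) / 2 → v = (vp + vm) / 2 → A = (Ap + Am) / 2 + α →
          c * α * u ^ 2 * v ≤ B₀ u v A - (B₀ up vp Ap + B₀ um vm Am) / 2) := by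
  rintro ⟨B, c, hc, hrange, hdrift⟩
  set f : ℕ → ℝ := fun n => B (2 ^ n) ((2 ^ n)⁻¹) 1 with hf
  have h2 : ∀ n : ℕ, (0:ℝ) < 2 ^ n := fun n => by positivity
  have hΩ : ∀ n : ℕ, Omega0 (2 ^ n) ((2 ^ n)⁻¹) 1 := fun n =>
    ⟨(h2 n).le, by positivity, by norm_num, le_refl 1,
      le_of_eq (mul_inv_cancel₀ (h2 n).ne')⟩
  have hΩm : ∀ n : ℕ, Omega0 0 (3 * (2 ^ (n+1))⁻¹) 0 := fun n =>
    ⟨le_refl 0, by positivity, le_refl 0, by norm_num, by norm_num⟩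
  have key : ∀ n : ℕ, c / 2 * 2 ^ n ≤ f n - f (n+1) / 2 := by
    intro n
    have h := hdrift (2 ^ n) ((2 ^ n)⁻¹) 1 (2 ^ (n+1)) ((2 ^ (n+1))⁻¹) 1
      0 (3 * (2 ^ (n+1))⁻¹) 0 (1/2) (hΩ n) (hΩ (n+1)) (hΩm n)
      (by norm_num) (by norm_num)
      (by rw [pow_succ]; ring)
      (by rw [pow_succ, mul_inv]; ring)
      (by norm_num)
    have hBm : 0 ≤ B 0 (3 * (2 ^ (n+1))⁻¹) 0 := (hrange _ _ _ (hΩm n)).1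
    have hval : c * (1/2) * (2 ^ n) ^ 2 * (2 ^ n)⁻¹ = c / 2 * 2 ^ n := by
      field_simp
    rw [hval] at h
    have : f n - (f (n+1) + B 0 (3 * (2 ^ (n+1))⁻¹) 0) / 2 ≤ f n - f (n+1) / 2 := by
      linarith
    exact h.trans this
  have main : ∀ n : ℕ, (n : ℝ) * (c / 2) + f n / 2 ^ n ≤ f 0 := by
    intro n
    induction n with
    | zero => simp
    | succ n ih =>
      have hk := key n
      have e : f (n+1) / 2 ^ (n+1) + c / 2 = (f (n+1) / 2 + c / 2 * 2 ^ n) / 2 ^ n := by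
        rw [pow_succ]; field_simp
      have hdiv : f (n+1) / 2 ^ (n+1) + c / 2 ≤ f n / 2 ^ n := by
        rw [e, div_le_div_iff₀ (h2 n) (h2 n)]
        nlinarith [h2 n]
      push_cast
      linarith
  obtain ⟨n, hn⟩ := exists_nat_gt (2 / c)
  have hfn : 0 ≤ f n := (hrange _ _ _ (hΩ n)).1
  have hf0 : f 0 ≤ 1 := by
    have h := (hrange _ _ _ (hΩ 0)).2
    have : f 0 = B 1 1 1 := by norm_num [hf]
    rw [this]
    simpa using h
  have h1 := main n
  have h2c : 2 < (n:ℝ) * c := (div_lt_iff₀ hc).mp hn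
  have hpos : 0 ≤ f n / 2 ^ n := by positivity
  nlinarith
end

section
/- Let ε : [1,∞) → (0,∞) be decreasing with t ↦ t·ε(t) increasing and concave, and ∫₁^∞ ε(t)/t dt < ∞, and let Ψ, Ψ₀ satisfy Ψ₀(s) ≤ C·Ψ(s)·ε(Ψ(s)). Let N : (0,∞) → [0,1] be decreasing with ∫₀^∞ N(t) dt = u < ∞. Then by Cauchy–Schwarz and Jensen applied to the probability measure dμ = N(t)dt/u, one has ∫₀^∞ N(t)/Ψ₀(N(t)) dt ≥ u² / (C·W·ε(W/u)), where W = ∫₀^∞ N(t)Ψ(N(t)) dt. -/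
open Set MeasureTheory Filter Topology NNReal ENNReal

/-- Cauchy–Schwarz plus Jensen step.  Let `ε : [1,∞) → (0,∞)` be
decreasing with `t ↦ tε(t)` increasing and concave and `∫₁^∞ ε(t)/t dt < ∞`; let
`Ψ, Ψ₀` (decreasing, positive on `(0,1]`, `Ψ ≥ 1`) satisfy `Ψ₀(s) ≤ C Ψ(s) ε(Ψ(s))`.
If `N : (0,∞) → [0,1]` is decreasing with `u = ∫₀^∞ N dt < ∞` (all integrals finite),
then `∫₀^∞ N/Ψ₀(N) dt ≥ u² / (C · W · ε(W/u))` where `W = ∫₀^∞ N Ψ(N) dt`. -/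
theorem stmt_19 (ε : ℝ → ℝ)
    (hε_pos : ∀ t, 1 ≤ t → 0 < ε t)
    (hε_dec : AntitoneOn ε (Ici (1 : ℝ)))
    (ha_inc : MonotoneOn (fun t => t * ε t) (Ici (1 : ℝ)))
    (ha_conc : ConcaveOn ℝ (Ici (1 : ℝ)) (fun t => t * ε t))
    (hε_int : IntegrableOn (fun t => ε t / t) (Ici (1 : ℝ)))
    (C : ℝ) (hC : 0 < C)
    (Ψ Ψ₀ : ℝ → ℝ)
    (hΨ_dec : AntitoneOn Ψ (Ioc (0 : ℝ) 1))
    (hΨ_ge : ∀ s ∈ Ioc (0 : ℝ) 1, 1 ≤ Ψ s)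
    (hΨ₀_pos : ∀ s ∈ Ioc (0 : ℝ) 1, 0 < Ψ₀ s)
    (hΨ₀_le : ∀ s ∈ Ioc (0 : ℝ) 1, Ψ₀ s ≤ C * Ψ s * ε (Ψ s))
    (N : ℝ → ℝ)
    (hN_mem : ∀ t ∈ Ioi (0 : ℝ), N t ∈ Icc (0 : ℝ) 1)
    (hN_dec : AntitoneOn N (Ioi (0 : ℝ)))
    (hN_int : IntegrableOn N (Ioi (0 : ℝ)))
    (hNΨ_int : IntegrableOn (fun t => N t * Ψ (N t)) (Ioi (0 : ℝ)))
    (hNΨ₀_int : IntegrableOn (fun t => N t / Ψ₀ (N t)) (Ioi (0 : ℝ)))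
    (u W : ℝ)
    (hu : u = ∫ t in Ioi (0 : ℝ), N t) (hu_pos : 0 < u)
    (hW : W = ∫ t in Ioi (0 : ℝ), N t * Ψ (N t)) :
    u ^ 2 / (C * W * ε (W / u)) ≤ ∫ t in Ioi (0 : ℝ), N t / Ψ₀ (N t) := by
  clear hε_int hΨ_dec hN_dec
  set ν : Measure ℝ := volume.restrict (Ioi (0:ℝ)) with hνdef
  have hN_int' : Integrable N ν := hN_int
  have hNΨ_int' : Integrable (fun t => N t * Ψ (N t)) ν := hNΨ_int
  have hNΨ₀_int' : Integrable (fun t => N t / Ψ₀ (N t)) ν := hNΨ₀_int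
  have hae_pos : ∀ᵐ t ∂ν, t ∈ Ioi (0:ℝ) := ae_restrict_mem measurableSet_Ioi
  have hN_meas : AEMeasurable N ν := hN_int'.aemeasurable
  have hN01 : ∀ᵐ t ∂ν, N t ∈ Icc (0:ℝ) 1 := hae_pos.mono fun t ht => hN_mem t ht
  -- measurability of Ψ ∘ N
  obtain ⟨Nm, hNm_meas, hNm_eq⟩ := hN_meas
  have hN_meas : AEMeasurable N ν := ⟨Nm, hNm_meas, hNm_eq⟩
  have hΨN_meas : AEMeasurable (fun t => Ψ (N t)) ν := by
    have hset : MeasurableSet {t : ℝ | Nm t = 0} := hNm_meas (measurableSet_singleton 0)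
    have h1 : AEMeasurable (fun t => indicator {t : ℝ | Nm t = 0} (fun _ => Ψ 0) t
        + indicator {t : ℝ | Nm t = 0}ᶜ (fun t => N t * Ψ (N t) / N t) t) ν := by
      refine AEMeasurable.add ?_ ?_
      · exact (measurable_const.indicator hset).aemeasurable
      · exact (hNΨ_int'.1.aemeasurable.div ⟨Nm, hNm_meas, hNm_eq⟩).indicator hset.compl
    refine h1.congr ?_
    filter_upwards [hNm_eq] with t ht
    by_cases h0 : Nm t = 0
    · have hmem : t ∈ {t : ℝ | Nm t = 0} := h0
      rw [indicator_of_mem hmem, indicator_of_notMem (by simpa using h0)]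
      rw [ht, h0]
      simp
    · have hmem : t ∈ {t : ℝ | Nm t = 0}ᶜ := h0
      rw [indicator_of_notMem (by simpa using h0), indicator_of_mem hmem]
      have hne : N t ≠ 0 := by rw [ht]; exact h0
      rw [zero_add, mul_comm, mul_div_assoc, div_self hne, mul_one]
  -- the probability-type measure
  set d : ℝ → ℝ≥0 := fun t => Real.toNNReal (N t) with hd_def
  have hd_meas : AEMeasurable d ν := measurable_real_toNNReal.comp_aemeasurable hN_meas
  set μ : Measure ℝ := ν.withDensity (fun t => (d t : ℝ≥0∞)) with hμ_def
  have hμ_ac : μ ≪ ν := withDensity_absolutelyContinuous _ _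
  have hd_meas' : AEMeasurable (fun t => (d t : ℝ≥0∞)) ν := hd_meas.coe_nnreal_ennreal
  have hμuniv : μ Set.univ = ENNReal.ofReal u := by
    rw [hμ_def, withDensity_apply _ MeasurableSet.univ, Measure.restrict_univ, hu,
      ofReal_integral_eq_lintegral_ofReal hN_int' (hN01.mono fun t ht => ht.1)]
    rfl
  haveI : IsFiniteMeasure μ := ⟨by rw [hμuniv]; exact ENNReal.ofReal_lt_top⟩
  haveI : NeZero μ := by
    refine ⟨fun h => ?_⟩
    rw [h] at hμuniv
    simp only [Measure.coe_zero, Pi.zero_apply] at hμuniv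
    exact (ENNReal.ofReal_pos.2 hu_pos).ne' hμuniv.symm
  have hae_μ : ∀ᵐ t ∂μ, N t ∈ Ioc (0:ℝ) 1 := by
    rw [hμ_def, ae_withDensity_iff' hd_meas']
    filter_upwards [hN01] with t ht hne
    have hd0 : d t ≠ 0 := by simpa using hne
    have hpos : 0 < N t := Real.toNNReal_pos.1 (pos_iff_ne_zero.2 hd0)
    exact ⟨hpos, ht.2⟩
  -- the extended concave function a
  set a : ℝ → ℝ := fun t => max t 1 * ε (max t 1) with ha_def
  have ha_mono : Monotone a := fun s t hst =>
    ha_inc (mem_Ici.2 (le_max_right s 1)) (mem_Ici.2 (le_max_right t 1))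
      (max_le_max hst le_rfl)
  have ha_meas : Measurable a := ha_mono.measurable
  have ha_eq : ∀ z : ℝ, 1 ≤ z → a z = z * ε z := by
    intro z hz
    simp only [ha_def, max_eq_left hz]
  have ha_pos : ∀ z : ℝ, 0 < a z := fun z =>
    mul_pos (lt_of_lt_of_le zero_lt_one (le_max_right z 1)) (hε_pos _ (le_max_right z 1))
  -- continuity of t ↦ t ε t on [1, ∞)
  have hcontOn : ContinuousOn (fun t => t * ε t) (Ici (1:ℝ)) := by
    intro x hx
    have hx1 : (1:ℝ) ≤ x := hx
    have hx0 : (0:ℝ) < x := lt_of_lt_of_le one_pos hx1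
    set c : ℝ := x * ε x with hc
    have hkey : ∀ t ∈ Ici (1:ℝ), t / x * c = t * ε x := by
      intro t _
      field_simp [hc]
      ring
    have lower : ∀ t ∈ Ici (1:ℝ), min c (t / x * c) ≤ t * ε t := by
      intro t ht
      rcases le_total t x with h | h
      · refine le_trans (min_le_right _ _) ?_
        rw [hkey t ht]
        have hεx : ε x ≤ ε t := hε_dec ht (mem_Ici.2 hx1) h
        have ht0 : (0:ℝ) < t := lt_of_lt_of_le one_pos (mem_Ici.1 ht)
        nlinarith
      · exact le_trans (min_le_left _ _) (ha_inc (mem_Ici.2 hx1) ht h)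
    have upper : ∀ t ∈ Ici (1:ℝ), t * ε t ≤ max c (t / x * c) := by
      intro t ht
      rcases le_total t x with h | h
      · exact le_trans (ha_inc ht (mem_Ici.2 hx1) h) (le_max_left _ _)
      · refine le_trans ?_ (le_max_right _ _)
        rw [hkey t ht]
        have hεx : ε t ≤ ε x := hε_dec (mem_Ici.2 hx1) ht h
        have ht0 : (0:ℝ) < t := lt_of_lt_of_le one_pos (mem_Ici.1 ht)
        nlinarith
    have hlim1 : Tendsto (fun t : ℝ => min c (t / x * c)) (𝓝[Ici (1:ℝ)] x) (𝓝 c) := by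
      have hco : ContinuousAt (fun t : ℝ => min c (t / x * c)) x :=
        (continuous_const.min ((continuous_id.div_const x).mul continuous_const)).continuousAt
      have h2 := hco.tendsto.mono_left (nhdsWithin_le_nhds (s := Ici (1:ℝ)))
      simpa [div_self hx0.ne'] using h2
    have hlim2 : Tendsto (fun t : ℝ => max c (t / x * c)) (𝓝[Ici (1:ℝ)] x) (𝓝 c) := by
      have hco : ContinuousAt (fun t : ℝ => max c (t / x * c)) x :=
        (continuous_const.max ((continuous_id.div_const x).mul continuous_const)).continuousAt
      have h2 := hco.tendsto.mono_left (nhdsWithin_le_nhds (s := Ici (1:ℝ)))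
      simpa [div_self hx0.ne'] using h2
    have : Tendsto (fun t => t * ε t) (𝓝[Ici (1:ℝ)] x) (𝓝 c) := by
      refine tendsto_of_tendsto_of_tendsto_of_le_of_le' hlim1 hlim2 ?_ ?_
      · exact eventually_nhdsWithin_of_forall lower
      · exact eventually_nhdsWithin_of_forall upper
    exact this
  have ha_contOn : ContinuousOn a (Ici (1:ℝ)) :=
    hcontOn.congr fun z hz => ha_eq z hz
  have ha_conc' : ConcaveOn ℝ (Ici (1:ℝ)) a := by
    refine ⟨ha_conc.1, fun x hx y hy p q hp hq hpq => ?_⟩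
    have hmem : p • x + q • y ∈ Ici (1:ℝ) := ha_conc.1 hx hy hp hq hpq
    rw [ha_eq _ hx, ha_eq _ hy, ha_eq _ hmem]
    exact ha_conc.2 hx hy hp hq hpq
  -- u ≤ W
  have huW : u ≤ W := by
    rw [hu, hW]
    refine integral_mono_ae hN_int' hNΨ_int' ?_
    filter_upwards [hN01] with t ht
    rcases eq_or_lt_of_le ht.1 with h0 | h0
    · rw [← h0]; simp
    · have h1 := hΨ_ge (N t) ⟨h0, ht.2⟩
      nlinarith
  have hWu1 : (1:ℝ) ≤ W / u := (one_le_div hu_pos).2 huW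
  -- Jensen inputs
  have hfs : ∀ᵐ t ∂μ, Ψ (N t) ∈ Ici (1:ℝ) := hae_μ.mono fun t ht => hΨ_ge _ ht
  have hfi : Integrable (fun t => Ψ (N t)) μ := by
    rw [hμ_def, integrable_withDensity_iff_integrable_smul₀ hd_meas]
    refine hNΨ_int'.congr ?_
    filter_upwards [hN01] with t ht
    simp [NNReal.smul_def, hd_def, Real.coe_toNNReal _ ht.1]
  set NA : ℝ → ℝ := fun t => N t * a (Ψ (N t)) with hNA_def
  have hNA_meas : AEMeasurable NA ν := hN_meas.mul (ha_meas.comp_aemeasurable hΨN_meas)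
  have hNA_nonneg : ∀ t, 0 ≤ N t * a (Ψ (N t)) → True := fun _ _ => trivial
  have hNA_bound : ∀ᵐ t ∂ν, ‖NA t‖ ≤ ε 1 * (N t * Ψ (N t)) := by
    filter_upwards [hN01] with t ht
    rcases eq_or_lt_of_le ht.1 with h0 | h0
    · simp [hNA_def, ← h0]
    · have hmem : N t ∈ Ioc (0:ℝ) 1 := ⟨h0, ht.2⟩
      have h1 := hΨ_ge _ hmem
      have he : a (Ψ (N t)) = Ψ (N t) * ε (Ψ (N t)) := ha_eq _ h1
      have hεle : ε (Ψ (N t)) ≤ ε 1 := hε_dec (mem_Ici.2 le_rfl) (mem_Ici.2 h1) h1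
      have hnn : 0 ≤ NA t := mul_nonneg h0.le (ha_pos _).le
      rw [Real.norm_of_nonneg hnn]
      simp only [hNA_def]
      rw [he, ← mul_assoc, mul_comm (ε 1)]
      exact mul_le_mul_of_nonneg_left hεle (by positivity)
  have hNA_int : Integrable NA ν :=
    (hNΨ_int'.const_mul (ε 1)).mono' hNA_meas.aestronglyMeasurable hNA_bound
  have hgi : Integrable ((fun z => a z) ∘ (fun t => Ψ (N t))) μ := by
    rw [hμ_def, integrable_withDensity_iff_integrable_smul₀ hd_meas]
    refine hNA_int.congr ?_
    filter_upwards [hN01] with t ht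
    simp [Function.comp, NNReal.smul_def, hd_def, Real.coe_toNNReal _ ht.1, hNA_def]
  have jensen := ha_conc'.le_map_average ha_contOn isClosed_Ici hfs hfi hgi
  have hμtoReal : (μ Set.univ).toReal = u := by
    rw [hμuniv, ENNReal.toReal_ofReal hu_pos.le]
  have hint_f : ∫ t, Ψ (N t) ∂μ = W := by
    rw [hμ_def, integral_withDensity_eq_integral_smul₀ hd_meas, hW]
    refine integral_congr_ae ?_
    filter_upwards [hN01] with t ht
    simp [NNReal.smul_def, hd_def, Real.coe_toNNReal _ ht.1]
  have hint_g : ∫ t, a (Ψ (N t)) ∂μ = ∫ t, NA t ∂ν := by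
    rw [hμ_def, integral_withDensity_eq_integral_smul₀ hd_meas]
    refine integral_congr_ae ?_
    filter_upwards [hN01] with t ht
    simp [NNReal.smul_def, hd_def, Real.coe_toNNReal _ ht.1, hNA_def]
  rw [average_eq, average_eq, measureReal_def, hμtoReal] at jensen
  rw [hint_f, hint_g] at jensen
  have hV_le : ∫ t, NA t ∂ν ≤ W * ε (W / u) := by
    rw [smul_eq_mul, smul_eq_mul, show u⁻¹ * W = W / u from inv_mul_eq_div u W,
      ha_eq _ hWu1] at jensen
    have h2 := mul_le_mul_of_nonneg_left jensen hu_pos.le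
    calc ∫ t, NA t ∂ν = u * (u⁻¹ * ∫ t, NA t ∂ν) := by field_simp
    _ ≤ u * (W / u * ε (W / u)) := h2
    _ = W * ε (W / u) := by field_simp
  -- the quantity J
  set NΨ₀ : ℝ → ℝ := fun t => N t * Ψ₀ (N t) with hNΨ₀_def
  have hJ_meas : AEMeasurable NΨ₀ ν := by
    have h2 : AEMeasurable (fun t => N t ^ 2 * (N t / Ψ₀ (N t))⁻¹) ν :=
      (hN_meas.pow_const 2).mul hNΨ₀_int'.1.aemeasurable.inv
    refine h2.congr ?_
    filter_upwards [hN01] with t ht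
    rcases eq_or_lt_of_le ht.1 with h0 | h0
    · simp only [hNΨ₀_def]; rw [← h0]; simp
    · have hp := hΨ₀_pos _ ⟨h0, ht.2⟩
      simp only [hNΨ₀_def]
      rw [inv_div]
      field_simp
  have hJ_bound : ∀ᵐ t ∂ν, NΨ₀ t ≤ C * NA t := by
    filter_upwards [hN01] with t ht
    rcases eq_or_lt_of_le ht.1 with h0 | h0
    · simp [hNΨ₀_def, hNA_def, ← h0]
    · have hmem : N t ∈ Ioc (0:ℝ) 1 := ⟨h0, ht.2⟩
      have h1 := hΨ₀_le _ hmem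
      have h2 := ha_eq _ (hΨ_ge _ hmem)
      simp only [hNΨ₀_def, hNA_def, h2]
      nlinarith
  have hJ_int : Integrable NΨ₀ ν := by
    refine (hNΨ_int'.const_mul (C * ε 1)).mono' hJ_meas.aestronglyMeasurable ?_
    filter_upwards [hN01] with t ht
    rcases eq_or_lt_of_le ht.1 with h0 | h0
    · simp [hNΨ₀_def, ← h0]
    · have hmem : N t ∈ Ioc (0:ℝ) 1 := ⟨h0, ht.2⟩
      have h1 := hΨ₀_le _ hmem
      have hg1 := hΨ_ge _ hmem
      have hεle : ε (Ψ (N t)) ≤ ε 1 := hε_dec (mem_Ici.2 le_rfl) (mem_Ici.2 hg1) hg1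
      have hnn : 0 ≤ NΨ₀ t := mul_nonneg h0.le (hΨ₀_pos _ hmem).le
      rw [Real.norm_of_nonneg hnn]
      simp only [hNΨ₀_def]
      have hεp := hε_pos _ hg1
      have hNΨnn : 0 ≤ C * (N t * Ψ (N t)) :=
        mul_nonneg hC.le (mul_nonneg h0.le (le_trans zero_le_one hg1))
      calc N t * Ψ₀ (N t) ≤ N t * (C * Ψ (N t) * ε (Ψ (N t))) :=
            mul_le_mul_of_nonneg_left h1 h0.le
      _ = C * (N t * Ψ (N t)) * ε (Ψ (N t)) := by ring
      _ ≤ C * (N t * Ψ (N t)) * ε 1 := mul_le_mul_of_nonneg_left hεle hNΨnn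
      _ = C * ε 1 * (N t * Ψ (N t)) := by ring
  have hJ_le : ∫ t, NΨ₀ t ∂ν ≤ C * (W * ε (W / u)) := by
    calc ∫ t, NΨ₀ t ∂ν ≤ ∫ t, C * NA t ∂ν :=
          integral_mono_ae hJ_int (hNA_int.const_mul C) hJ_bound
    _ = C * ∫ t, NA t ∂ν := by rw [integral_const_mul]
    _ ≤ C * (W * ε (W / u)) := mul_le_mul_of_nonneg_left hV_le hC.le
  -- Cauchy–Schwarz
  have hdiv_nonneg : ∀ᵐ t ∂ν, 0 ≤ N t / Ψ₀ (N t) := by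
    filter_upwards [hN01] with t ht
    rcases eq_or_lt_of_le ht.1 with h0 | h0
    · rw [← h0]; simp
    · exact div_nonneg h0.le (hΨ₀_pos _ ⟨h0, ht.2⟩).le
  have hJ_nonneg' : ∀ᵐ t ∂ν, 0 ≤ NΨ₀ t := by
    filter_upwards [hN01] with t ht
    rcases eq_or_lt_of_le ht.1 with h0 | h0
    · simp only [hNΨ₀_def]; rw [← h0]; simp
    · exact mul_nonneg h0.le (hΨ₀_pos _ ⟨h0, ht.2⟩).le
  set I : ℝ := ∫ t, N t / Ψ₀ (N t) ∂ν with hI_def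
  set J : ℝ := ∫ t, NΨ₀ t ∂ν with hJ_def
  have hI_nonneg : 0 ≤ I := integral_nonneg_of_ae hdiv_nonneg
  have hJ_nonneg : 0 ≤ J := integral_nonneg_of_ae hJ_nonneg'
  have hCS : u ≤ Real.sqrt I * Real.sqrt J := by
    have hpq : Real.HolderConjugate 2 2 := ⟨by norm_num, by norm_num, by norm_num⟩
    have hmf : AEStronglyMeasurable (fun t => Real.sqrt (N t / Ψ₀ (N t))) ν :=
      (Real.continuous_sqrt.measurable.comp_aemeasurable
        hNΨ₀_int'.1.aemeasurable).aestronglyMeasurable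
    have hmg : AEStronglyMeasurable (fun t => Real.sqrt (NΨ₀ t)) ν :=
      (Real.continuous_sqrt.measurable.comp_aemeasurable hJ_meas).aestronglyMeasurable
    have h2eq : ENNReal.ofReal (2:ℝ) = 2 := by
      rw [ENNReal.ofReal_ofNat]
    have hmemf : MemLp (fun t => Real.sqrt (N t / Ψ₀ (N t))) (ENNReal.ofReal 2) ν := by
      rw [h2eq, memLp_two_iff_integrable_sq hmf]
      refine hNΨ₀_int'.congr ?_
      filter_upwards [hdiv_nonneg] with t ht
      rw [Real.sq_sqrt ht]
    have hmemg : MemLp (fun t => Real.sqrt (NΨ₀ t)) (ENNReal.ofReal 2) ν := by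
      rw [h2eq, memLp_two_iff_integrable_sq hmg]
      refine hJ_int.congr ?_
      filter_upwards [hJ_nonneg'] with t ht
      rw [Real.sq_sqrt ht]
    have hH := integral_mul_le_Lp_mul_Lq_of_nonneg hpq
      (univ_mem' fun t => Real.sqrt_nonneg _) (univ_mem' fun t => Real.sqrt_nonneg _)
      hmemf hmemg
    have hfg : ∫ t, Real.sqrt (N t / Ψ₀ (N t)) * Real.sqrt (NΨ₀ t) ∂ν = u := by
      rw [hu]
      refine integral_congr_ae ?_
      filter_upwards [hN01] with t ht
      rcases eq_or_lt_of_le ht.1 with h0 | h0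
      · simp only [hNΨ₀_def]; rw [← h0]; simp
      · have hp := hΨ₀_pos _ ⟨h0, ht.2⟩
        simp only [hNΨ₀_def]
        rw [← Real.sqrt_mul (div_nonneg h0.le hp.le)]
        rw [show N t / Ψ₀ (N t) * (N t * Ψ₀ (N t)) = N t ^ 2 by field_simp]
        exact Real.sqrt_sq h0.le
    have hr2 : ∀ x : ℝ, x ^ (2:ℝ) = x ^ 2 := fun x => by
      rw [show (2:ℝ) = ((2:ℕ):ℝ) by norm_num, Real.rpow_natCast]
    have hIeq : ∫ t, Real.sqrt (N t / Ψ₀ (N t)) ^ (2:ℝ) ∂ν = I := by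
      rw [hI_def]
      refine integral_congr_ae ?_
      filter_upwards [hdiv_nonneg] with t ht
      rw [hr2, Real.sq_sqrt ht]
    have hJeq : ∫ t, Real.sqrt (NΨ₀ t) ^ (2:ℝ) ∂ν = J := by
      rw [hJ_def]
      refine integral_congr_ae ?_
      filter_upwards [hJ_nonneg'] with t ht
      rw [hr2, Real.sq_sqrt ht]
    rw [hfg, hIeq, hJeq] at hH
    rw [Real.sqrt_eq_rpow, Real.sqrt_eq_rpow]
    exact hH
  have hIJ : u ^ 2 ≤ I * J := by
    calc u ^ 2 ≤ (Real.sqrt I * Real.sqrt J) ^ 2 := by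
          exact pow_le_pow_left₀ hu_pos.le hCS 2
    _ = I * J := by rw [mul_pow, Real.sq_sqrt hI_nonneg, Real.sq_sqrt hJ_nonneg]
  have hW_pos : 0 < W := lt_of_lt_of_le hu_pos huW
  have hεWu := hε_pos _ hWu1
  have hD_pos : 0 < C * W * ε (W / u) := by positivity
  rw [div_le_iff₀ hD_pos]
  calc u ^ 2 ≤ I * J := hIJ
  _ ≤ I * (C * (W * ε (W / u))) := mul_le_mul_of_nonneg_left hJ_le hI_nonneg
  _ = I * (C * W * ε (W / u)) := by ring
end
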